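/- If X is an infinite-dimensional real Hilbert space, then the weak closure of C_α = {(x,y,γ) ∈ X × X × ℝ : ⟨x,y⟩ = αγ} is all of X × X × ℝ. -/

import Mathlib

variable {X : Type*} [NormedAddCommGroup X] [InnerProductSpace ℝ X]

open Filter Topology UniformSpace

/-- In an infinite-dimensional space there is an orthonormal sequence. -/
lemma exists_orthonormal_seq (hX : ¬ FiniteDimensional ℝ X) :
    ∃ e : ℕ → X, Orthonormal ℝ e := by
  let b := Module.Basis.ofVectorSpace ℝ X
  have hinf : Infinite (Module.Basis.ofVectorSpaceIndex ℝ X) := by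
    rw [← not_finite_iff_infinite]
    intro h
    haveI : Fintype (Module.Basis.ofVectorSpaceIndex ℝ X) := Fintype.ofFinite _
    exact hX (Module.Finite.of_basis b)
  let emb := Infinite.natEmbedding (Module.Basis.ofVectorSpaceIndex ℝ X)
  have li : LinearIndependent ℝ (b ∘ emb) := b.linearIndependent.comp emb emb.injective
  exact ⟨InnerProductSpace.gramSchmidtNormed ℝ (b ∘ emb), InnerProductSpace.gramSchmidtNormed_orthonormal li⟩

/-- An orthonormal sequence converges weakly to zero. -/
lemma tendsto_apply_orthonormal {e : ℕ → X} (he : Orthonormal ℝ e) (g : X →L[ℝ] ℝ) :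
    Tendsto (fun n => g (e n)) atTop (𝓝 0) := by
  have hd : DenseRange (Completion.toComplL : X →L[ℝ] Completion X) := by
    rw [Completion.coe_toComplL]; exact Completion.denseRange_coe
  have hi : IsUniformInducing (Completion.toComplL : X →L[ℝ] Completion X) := by
    rw [Completion.coe_toComplL]; exact Completion.isUniformInducing_coe X
  let ψ : Completion X →L[ℝ] ℝ := g.extend Completion.toComplL
  set z : Completion X := (InnerProductSpace.toDual ℝ (Completion X)).symm ψ with hzdef
  have hz : ∀ v : Completion X, (inner ℝ z v : ℝ) = ψ v := fun v =>
    InnerProductSpace.toDual_symm_apply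
  have hec : Orthonormal ℝ (fun n => ((e n : Completion X))) := by
    rw [orthonormal_iff_ite] at he ⊢
    intro i j
    rw [Completion.inner_coe]
    exact he i j
  have key : ∀ n, g (e n) = (inner ℝ (e n : Completion X) z : ℝ) := by
    intro n
    rw [real_inner_comm, hz]
    exact (ContinuousLinearMap.extend_eq g hd hi (e n)).symm
  have h1 : Tendsto (fun n => ‖(inner ℝ (e n : Completion X) z : ℝ)‖ ^ 2) atTop (𝓝 0) :=
    (hec.inner_products_summable (x := z)).tendsto_atTop_zero
  have h2 := h1.sqrt
  rw [Real.sqrt_zero] at h2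
  have h3 : (fun n => Real.sqrt (‖(inner ℝ (e n : Completion X) z : ℝ)‖ ^ 2)) =
      fun n => ‖g (e n)‖ := by
    funext n
    rw [Real.sqrt_sq (norm_nonneg _), key n]
  rw [h3] at h2
  exact tendsto_zero_iff_norm_tendsto_zero.mpr h2

/-- The set `C_α`. -/
def Cα (α : ℝ) : Set (X × X × ℝ) := {p | (inner ℝ p.1 p.2.1 : ℝ) = α * p.2.2}

theorem stmt1 (hX : ¬ FiniteDimensional ℝ X) (α : ℝ) (hα : α ≠ 0) :
    closure (show Set (WeakSpace ℝ (X × X × ℝ)) from Cα α) = Set.univ := by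
  obtain ⟨e, he⟩ := exists_orthonormal_seq hX
  rw [Set.eq_univ_iff_forall]
  intro p
  obtain ⟨x, y, γ⟩ := p
  set t : ℕ → ℝ := fun n =>
    (α * γ - (inner ℝ x y : ℝ) - (inner ℝ x (e n) : ℝ)) / ((inner ℝ y (e n) : ℝ) + 1) with htdef
  set seq : ℕ → WeakSpace ℝ (X × X × ℝ) := fun n => (x + t n • e n, y + e n, γ) with hseqdef
  have ha : Tendsto (fun n => (inner ℝ y (e n) : ℝ)) atTop (𝓝 0) := by
    simpa using tendsto_apply_orthonormal he (innerSL ℝ y)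
  have hb : Tendsto (fun n => (inner ℝ x (e n) : ℝ)) atTop (𝓝 0) := by
    simpa using tendsto_apply_orthonormal he (innerSL ℝ x)
  have hden : ∀ᶠ n in atTop, (0:ℝ) < (inner ℝ y (e n) : ℝ) + 1 := by
    filter_upwards [ha.eventually (eventually_gt_nhds (by norm_num : (-1:ℝ) < 0))] with n hn
    linarith
  have ht : Tendsto t atTop (𝓝 (α * γ - (inner ℝ x y : ℝ))) := by
    have := ((tendsto_const_nhds (x := α * γ - (inner ℝ x y : ℝ))).sub hb).div
      (ha.add (tendsto_const_nhds (x := (1:ℝ)))) (by norm_num)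
    simp only [sub_zero, zero_add, div_one] at this
    exact this
  have hmem : ∀ᶠ n in atTop, seq n ∈ (show Set (WeakSpace ℝ (X × X × ℝ)) from Cα α) := by
    filter_upwards [hden] with n hn
    have hne : (inner ℝ y (e n) : ℝ) + 1 ≠ 0 := ne_of_gt hn
    show (inner ℝ (x + t n • e n) (y + e n) : ℝ) = α * γ
    have hnorm : (inner ℝ (e n) (e n) : ℝ) = 1 := by
      rw [real_inner_self_eq_norm_sq, he.1 n]; norm_num
    have expand : (inner ℝ (x + t n • e n) (y + e n) : ℝ)
        = (inner ℝ x y : ℝ) + (inner ℝ x (e n) : ℝ) + t n * ((inner ℝ y (e n) : ℝ) + 1) := by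
      rw [inner_add_left, inner_add_right, inner_add_right, real_inner_smul_left,
        real_inner_smul_left, hnorm, real_inner_comm (e n) y]
      ring
    rw [expand, htdef]
    field_simp
    ring
  have htend : Tendsto seq atTop (𝓝 (show WeakSpace ℝ (X × X × ℝ) from ((x, y, γ) : X × X × ℝ))) := by
    have hinj : Function.Injective ⇑(topDualPairing ℝ (X × X × ℝ)).flip :=
      separatingDual_iff_injective.mp inferInstance
    refine (WeakBilin.tendsto_iff_forall_eval_tendsto _ hinj).mpr ?_
    intro F
    set G1 : X →L[ℝ] ℝ := F.comp (ContinuousLinearMap.inl ℝ X (X × ℝ)) with hG1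
    set G2 : X →L[ℝ] ℝ :=
      F.comp ((ContinuousLinearMap.inr ℝ X (X × ℝ)).comp (ContinuousLinearMap.inl ℝ X ℝ)) with hG2
    have hF : ∀ n, (topDualPairing ℝ (X × X × ℝ)).flip (seq n) F
        = F (x, y, γ) + (t n * G1 (e n) + G2 (e n)) := by
      intro n
      show F (x + t n • e n, y + e n, γ) = _
      have h4 : ((x + t n • e n, y + e n, γ) : X × X × ℝ)
          = (x, y, γ) + (t n • (ContinuousLinearMap.inl ℝ X (X × ℝ)) (e n)
            + ((ContinuousLinearMap.inr ℝ X (X × ℝ)).comp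
                (ContinuousLinearMap.inl ℝ X ℝ)) (e n)) := by
        simp [Prod.ext_iff]
      rw [h4, map_add, map_add, map_smul]
      simp [hG1, hG2, smul_eq_mul]
    have hG1t := tendsto_apply_orthonormal he G1
    have hG2t := tendsto_apply_orthonormal he G2
    have main := (tendsto_const_nhds (x := F (x, y, γ))).add ((ht.mul hG1t).add hG2t)
    rw [mul_zero, add_zero, add_zero] at main
    exact main.congr (fun n => (hF n).symm)
  exact mem_closure_of_tendsto htend hmem
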